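/- Let g be an aligned history-dependent game with reference static game ĝ, let P be a local and monotone asynchronous learning rule, let π be a probability distribution on A, and let T ≥ 1. Then the probability that the history-dependent process is at the all-ones profile at time T is at least that of the static process: Pr(s(T;P_π) = 1⃗) ≥ Pr(s(T;P̂_π) = 1⃗). -/

import Mathlib

open scoped Classical
open Finset

abbrev Profile (n : ℕ) := Fin n → Bool
abbrev UtilProfile (n : ℕ) := Fin n → Profile n → ℝ
abbrev Rule (n : ℕ) := Profile n → Profile n → UtilProfile n → ℝ

/-- `P` is an individual learning rule for agent `i`: it maps into `[0,1]`, is a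
probability measure over next profiles, and only agent `i` may change its action. -/
def IsIndividual {n : ℕ} (i : Fin n) (P : Rule n) : Prop :=
  (∀ (a : Profile n) (U : UtilProfile n), ∑ b : Profile n, P a b U = 1) ∧
  (∀ (a b : Profile n) (U : UtilProfile n), 0 ≤ P a b U ∧ P a b U ≤ 1) ∧
  (∀ (a b : Profile n) (U : UtilProfile n), (∃ j, j ≠ i ∧ a j ≠ b j) → P a b U = 0)

/-- `P` is local: the transition probability only depends on the selected action of `i`
and the pair of payoffs `(U_i(0,a_{-i}), U_i(1,a_{-i}))`. -/
def IsLocalRule {n : ℕ} (i : Fin n) (P : Rule n) : Prop :=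
  ∃ Pbar : Bool → ℝ × ℝ → ℝ,
    ∀ (a : Profile n) (b : Bool) (U : UtilProfile n),
      P a (Function.update a i b) U
        = Pbar b (U i (Function.update a i false), U i (Function.update a i true))

/-- The utility profile obtained from `U` by adding `l` to agent `i`'s utility on
profiles where `i` plays `b`. -/
def bump {n : ℕ} (i : Fin n) (U : UtilProfile n) (b : Bool) (l : ℝ) : UtilProfile n :=
  Function.update U i (fun x => if x i = b then U i x + l else U i x)

/-- `P` is monotone with respect to utility. -/
def IsMonotoneRule {n : ℕ} (i : Fin n) (P : Rule n) : Prop :=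
  ∀ (U : UtilProfile n) (b : Bool) (l : ℝ), 0 ≤ l → ∀ a : Profile n,
    P a (Function.update a i b) U ≤ P a (Function.update a i b) (bump i U b l)

/-- The asynchronous learning rule built from individual learning rules. -/
noncomputable def asyncRule {n : ℕ} (Pvec : Fin n → Rule n) : Rule n :=
  fun a b U => (1 / (n : ℝ)) * ∑ i : Fin n, Pvec i a b U

/-- A finite (nonempty) history of action profiles; `⟨T, α⟩` has length `T+1`. -/
abbrev Hist (n : ℕ) := Σ T : ℕ, (Fin (T + 1) → Profile n)

/-- The last action profile of a history. -/
def lastProf {n : ℕ} (h : Hist n) : Profile n := h.2 (Fin.last h.1)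

/-- `Uh` is an aligned history-dependent game with reference static game `Uhat`. -/
def Aligned {n : ℕ} (Uh : Hist n → UtilProfile n) (Uhat : UtilProfile n) : Prop :=
  ∀ (h : Hist n) (a : Profile n) (i : Fin n),
    (∀ j, j ≠ i → a j ≤ lastProf h j) →
    Uhat i (Function.update a i true) ≤ Uh h i (Function.update (lastProf h) i true) ∧
    Uh h i (Function.update (lastProf h) i false) ≤ Uhat i (Function.update a i false)

/-- The prefix `α^{≤t}` of a path `α` (a history of length `t+1`). -/
def prefixHist {n T : ℕ} (α : Fin (T + 1) → Profile n) (t : Fin T) : Hist n :=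
  ⟨t.1, fun s => α (Fin.castLE (Nat.succ_le_succ t.isLt.le) s)⟩

/-- The path measure of the history-dependent game:
`P_π(α) = π(α¹) ∏_t P^{α^{≤t}}(α^{t+1})`. -/
noncomputable def pathHist {n : ℕ} (P : Rule n) (Uh : Hist n → UtilProfile n)
    (π : Profile n → ℝ) (T : ℕ) (α : Fin (T + 1) → Profile n) : ℝ :=
  π (α 0) * ∏ t : Fin T, P (α t.castSucc) (α t.succ) (Uh (prefixHist α t))

/-- The path measure of the static game:
`P̂_π(α) = π(α¹) ∏_t P̂^{α^t}(α^{t+1})`. -/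
noncomputable def pathStatic {n : ℕ} (P : Rule n) (Uhat : UtilProfile n)
    (π : Profile n → ℝ) (T : ℕ) (α : Fin (T + 1) → Profile n) : ℝ :=
  π (α 0) * ∏ t : Fin T, P (α t.castSucc) (α t.succ) Uhat

/-- `π` is a probability distribution on the set of action profiles. -/
def IsProb {n : ℕ} (π : Profile n → ℝ) : Prop :=
  (∀ a, 0 ≤ π a) ∧ ∑ a : Profile n, π a = 1

/-- The probability that the process governed by the path measure `μ` is at profile `a`
at the final time of paths of length `T+1`. -/
noncomputable def prAt {n : ℕ} (T : ℕ) (μ : (Fin (T + 1) → Profile n) → ℝ)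
    (a : Profile n) : ℝ :=
  ∑ α ∈ Finset.univ.filter (fun α : Fin (T + 1) → Profile n => α (Fin.last T) = a), μ α

section Core
variable {n : ℕ}

lemma update_ne_update (i : Fin n) (a : Profile n) :
    Function.update a i false ≠ Function.update a i true := by
  intro h
  have := congrFun h i
  simp at this

/-- Sum over all next profiles collapses to the two reachable ones. -/
lemma sum_support (i : Fin n) (P : Rule n) (hInd : IsIndividual i P)
    (a : Profile n) (U : UtilProfile n) (g : Profile n → ℝ) :
    ∑ b : Profile n, P a b U * g b
      = P a (Function.update a i false) U * g (Function.update a i false)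
        + P a (Function.update a i true) U * g (Function.update a i true) := by
  have hp := Finset.sum_pair (f := fun b => P a b U * g b) (update_ne_update i a)
  rw [← hp]
  refine (Finset.sum_subset (Finset.subset_univ _) ?_).symm
  intro b _ hb
  have hzero : P a b U = 0 := by
    apply hInd.2.2
    by_contra hc
    push_neg at hc
    have hb' : b = Function.update a i (b i) := by
      funext j
      by_cases hj : j = i
      · subst hj; simp
      · rw [Function.update_of_ne hj]
        exact (hc j hj).symm
    cases hbi : b i
    · exact hb (by simp [Finset.mem_insert, Finset.mem_singleton]; left; rw [hb', hbi])
    · exact hb (by simp [Finset.mem_insert, Finset.mem_singleton]; right; rw [hb', hbi])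
  rw [hzero, zero_mul]

lemma sum_two (i : Fin n) (P : Rule n) (hInd : IsIndividual i P)
    (a : Profile n) (U : UtilProfile n) :
    P a (Function.update a i false) U + P a (Function.update a i true) U = 1 := by
  have h := sum_support i P hInd a U (fun _ => 1)
  simp only [mul_one] at h
  rw [← h, hInd.1]

/-- Core comparison: probability of switching to `true` is monotone in the utility gap. -/
lemma pvec_true_mono (i : Fin n) (P : Rule n) (hInd : IsIndividual i P)
    (hLoc : IsLocalRule i P) (hMon : IsMonotoneRule i P)
    (x y : Profile n) (U V : UtilProfile n)
    (h0 : V i (Function.update y i false) ≤ U i (Function.update x i false))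
    (h1 : U i (Function.update x i true) ≤ V i (Function.update y i true)) :
    P x (Function.update x i true) U ≤ P y (Function.update y i true) V := by
  obtain ⟨Pb, hPb⟩ := hLoc
  set u0 := U i (Function.update x i false)
  set u1 := U i (Function.update x i true)
  set v0 := V i (Function.update y i false)
  set v1 := V i (Function.update y i true)
  rw [hPb x true U, hPb y true V]
  -- witnesses
  set a0 : Profile n := fun _ => false with ha0
  set W : ℝ → ℝ → UtilProfile n := fun c0 c1 => fun _ z => if z i then c1 else c0 with hW
  have hWeval : ∀ c0 c1 (b : Bool),
      (W c0 c1) i (Function.update a0 i b) = (if b then c1 else c0) := by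
    intro c0 c1 b; simp [hW]
  have hpb : ∀ c0 c1 (b : Bool),
      P a0 (Function.update a0 i b) (W c0 c1) = Pb b (c0, c1) := by
    intro c0 c1 b
    rw [hPb a0 b (W c0 c1), hWeval, hWeval]
    simp
  have mono1 : ∀ c0 c1 l, 0 ≤ l → Pb true (c0, c1) ≤ Pb true (c0, c1 + l) := by
    intro c0 c1 l hl
    have h := hMon (W c0 c1) true l hl a0
    rw [hPb a0 true (W c0 c1), hPb a0 true (bump i (W c0 c1) true l)] at h
    have e0 : (bump i (W c0 c1) true l) i (Function.update a0 i false) = c0 := by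
      simp [bump, hW]
    have e1 : (bump i (W c0 c1) true l) i (Function.update a0 i true) = c1 + l := by
      simp [bump, hW]
    rw [e0, e1, hWeval, hWeval] at h
    simpa using h
  have mono0 : ∀ c0 c1 l, 0 ≤ l → Pb false (c0, c1) ≤ Pb false (c0 + l, c1) := by
    intro c0 c1 l hl
    have h := hMon (W c0 c1) false l hl a0
    rw [hPb a0 false (W c0 c1), hPb a0 false (bump i (W c0 c1) false l)] at h
    have e0 : (bump i (W c0 c1) false l) i (Function.update a0 i false) = c0 + l := by
      simp [bump, hW]
    have e1 : (bump i (W c0 c1) false l) i (Function.update a0 i true) = c1 := by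
      simp [bump, hW]
    rw [e0, e1, hWeval, hWeval] at h
    simpa using h
  have sum1 : ∀ c0 c1, Pb false (c0, c1) + Pb true (c0, c1) = 1 := by
    intro c0 c1
    have := sum_two i P hInd a0 (W c0 c1)
    rwa [hpb, hpb] at this
  have step1 : Pb true (u0, u1) ≤ Pb true (u0, v1) := by
    have := mono1 u0 u1 (v1 - u1) (by linarith)
    simpa using this
  have step2 : Pb false (v0, v1) ≤ Pb false (u0, v1) := by
    have := mono0 v0 v1 (u0 - v0) (by linarith)
    simpa using this
  have s1 := sum1 u0 v1
  have s2 := sum1 v0 v1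
  linarith

end Core

section Dom
variable {n : ℕ}

/-- Extend a history by one more profile. -/
def extendH (h : Hist n) (y : Profile n) : Hist n := ⟨h.1 + 1, Fin.snoc h.2 y⟩

lemma lastProf_extendH (h : Hist n) (y : Profile n) : lastProf (extendH h y) = y := by
  simp [lastProf, extendH]

/-- Backward value function for the static game. -/
noncomputable def fS (Pvec : Fin n → Rule n) (Uhat : UtilProfile n) : ℕ → Profile n → ℝ
  | 0 => fun x => if x = (fun _ => true) then 1 else 0
  | T + 1 => fun x => ∑ y : Profile n, asyncRule Pvec x y Uhat * fS Pvec Uhat T y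

/-- Backward value function for the history-dependent game. -/
noncomputable def fH (Pvec : Fin n → Rule n) (Uh : Hist n → UtilProfile n) :
    ℕ → Hist n → ℝ
  | 0 => fun h => if lastProf h = (fun _ => true) then 1 else 0
  | T + 1 => fun h => ∑ y : Profile n,
      asyncRule Pvec (lastProf h) y (Uh h) * fH Pvec Uh T (extendH h y)

lemma fS_le_fH (Pvec : Fin n → Rule n)
    (hP : ∀ i, IsIndividual i (Pvec i) ∧ IsLocalRule i (Pvec i) ∧ IsMonotoneRule i (Pvec i))
    (Uh : Hist n → UtilProfile n) (Uhat : UtilProfile n) (hA : Aligned Uh Uhat) :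
    ∀ (T : ℕ) (h : Hist n) (x : Profile n), (∀ j, x j ≤ lastProf h j) →
      fS Pvec Uhat T x ≤ fH Pvec Uh T h := by
  intro T
  induction T with
  | zero =>
    intro h x hx
    simp only [fS, fH]
    by_cases hx1 : x = (fun _ => true)
    · have hy1 : lastProf h = (fun _ => true) := by
        funext j
        have := hx j
        rw [hx1] at this
        exact Bool.eq_true_of_true_le (by simpa using this)
      simp [hx1, hy1]
    · rw [if_neg hx1]
      split <;> norm_num
  | succ T ih =>
    intro h x hx
    set y0 := lastProf h with hy0
    simp only [fS, fH, asyncRule]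
    -- push the (1/n) factor and swap sums
    have lhs_eq : ∑ y : Profile n,
        ((1 / (n:ℝ)) * ∑ i : Fin n, Pvec i x y Uhat) * fS Pvec Uhat T y
        = (1 / (n:ℝ)) * ∑ i : Fin n, ∑ y : Profile n, Pvec i x y Uhat * fS Pvec Uhat T y := by
      have hterm : ∀ y : Profile n,
          ((1 / (n:ℝ)) * ∑ i : Fin n, Pvec i x y Uhat) * fS Pvec Uhat T y
            = ∑ i : Fin n, (1 / (n:ℝ)) * (Pvec i x y Uhat * fS Pvec Uhat T y) := by
        intro y
        rw [mul_assoc, Finset.sum_mul, Finset.mul_sum]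
      simp only [hterm]
      rw [Finset.sum_comm, Finset.mul_sum]
      exact Finset.sum_congr rfl fun i _ => (Finset.mul_sum _ _ _).symm
    have rhs_eq : ∑ y : Profile n,
        ((1 / (n:ℝ)) * ∑ i : Fin n, Pvec i y0 y (Uh h)) * fH Pvec Uh T (extendH h y)
        = (1 / (n:ℝ)) * ∑ i : Fin n, ∑ y : Profile n,
            Pvec i y0 y (Uh h) * fH Pvec Uh T (extendH h y) := by
      have hterm : ∀ y : Profile n,
          ((1 / (n:ℝ)) * ∑ i : Fin n, Pvec i y0 y (Uh h)) * fH Pvec Uh T (extendH h y)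
            = ∑ i : Fin n, (1 / (n:ℝ)) * (Pvec i y0 y (Uh h) * fH Pvec Uh T (extendH h y)) := by
        intro y
        rw [mul_assoc, Finset.sum_mul, Finset.mul_sum]
      simp only [hterm]
      rw [Finset.sum_comm, Finset.mul_sum]
      exact Finset.sum_congr rfl fun i _ => (Finset.mul_sum _ _ _).symm
    rw [lhs_eq, rhs_eq]
    apply mul_le_mul_of_nonneg_left _ (by positivity)
    apply Finset.sum_le_sum
    intro i _
    obtain ⟨hInd, hLoc, hMon⟩ := hP i
    rw [sum_support i (Pvec i) hInd x Uhat, sum_support i (Pvec i) hInd y0 (Uh h)]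
    -- abbreviations
    set p0 := Pvec i x (Function.update x i false) Uhat
    set p1 := Pvec i x (Function.update x i true) Uhat
    set q0 := Pvec i y0 (Function.update y0 i false) (Uh h)
    set q1 := Pvec i y0 (Function.update y0 i true) (Uh h)
    set sxf := fS Pvec Uhat T (Function.update x i false)
    set sxt := fS Pvec Uhat T (Function.update x i true)
    set gyf := fH Pvec Uh T (extendH h (Function.update y0 i false))
    set gyt := fH Pvec Uh T (extendH h (Function.update y0 i true))
    have hsp : p0 + p1 = 1 := sum_two i (Pvec i) hInd x Uhat
    have hsq : q0 + q1 = 1 := sum_two i (Pvec i) hInd y0 (Uh h)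
    have hp1 : 0 ≤ p1 := (hInd.2.1 _ _ _).1
    have hq1 : q1 ≤ 1 := (hInd.2.1 _ _ _).2
    have halign := hA h x i (fun j _ => hx j)
    have hpq : p1 ≤ q1 :=
      pvec_true_mono i (Pvec i) hInd hLoc hMon x y0 Uhat (Uh h) halign.2 halign.1
    have ih_tt : sxt ≤ gyt := by
      apply ih
      intro j
      rw [lastProf_extendH]
      by_cases hj : j = i
      · subst hj; simp
      · rw [Function.update_of_ne hj, Function.update_of_ne hj]; exact hx j
    have ih_ff : sxf ≤ gyf := by
      apply ih
      intro j
      rw [lastProf_extendH]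
      by_cases hj : j = i
      · subst hj; simp
      · rw [Function.update_of_ne hj, Function.update_of_ne hj]; exact hx j
    have ih_ft : sxf ≤ gyt := by
      apply ih
      intro j
      rw [lastProf_extendH]
      by_cases hj : j = i
      · subst hj; simp
      · rw [Function.update_of_ne hj, Function.update_of_ne hj]; exact hx j
    have e1 : 0 ≤ p1 * (gyt - sxt) := mul_nonneg hp1 (by linarith)
    have e2 : 0 ≤ (q1 - p1) * (gyt - sxf) := mul_nonneg (by linarith) (by linarith)
    have e3 : 0 ≤ (1 - q1) * (gyf - sxf) := mul_nonneg (by linarith) (by linarith)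
    have hp0 : p0 = 1 - p1 := by linarith
    have hq0 : q0 = 1 - q1 := by linarith
    rw [hp0, hq0]
    nlinarith [e1, e2, e3]

end Dom

section Paths
variable {n : ℕ}

lemma snoc_lt {T : ℕ} (β : Fin (T + 1) → Profile n) (y : Profile n)
    (j : Fin (T + 2)) (hj : j.1 < T + 1) :
    (Fin.snoc β y : Fin (T + 2) → Profile n) j = β ⟨j.1, hj⟩ := by
  have hj' : j = Fin.castSucc ⟨j.1, hj⟩ := by
    apply Fin.ext
    simp
  conv_lhs => rw [hj']
  rw [Fin.snoc_castSucc]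

lemma snoc_zero' {T : ℕ} (β : Fin (T + 1) → Profile n) (y : Profile n) :
    (Fin.snoc β y : Fin (T + 2) → Profile n) 0 = β 0 := by
  rw [show (0 : Fin (T + 2)) = Fin.castSucc 0 from (Fin.castSucc_zero).symm,
    Fin.snoc_castSucc]

lemma pathStatic_snoc (P : Rule n) (Uhat : UtilProfile n) (π : Profile n → ℝ) (T : ℕ)
    (β : Fin (T + 1) → Profile n) (y : Profile n) :
    pathStatic P Uhat π (T + 1) (Fin.snoc β y)
      = pathStatic P Uhat π T β * P (β (Fin.last T)) y Uhat := by
  unfold pathStatic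
  rw [Fin.prod_univ_castSucc]
  simp only [Fin.succ_castSucc, Fin.snoc_castSucc, Fin.succ_last, Fin.snoc_last,
    snoc_zero']
  ring

lemma prefixHist_snoc_castSucc {T : ℕ} (β : Fin (T + 1) → Profile n) (y : Profile n)
    (s : Fin T) :
    prefixHist (Fin.snoc β y : Fin (T + 2) → Profile n) (Fin.castSucc s) = prefixHist β s := by
  unfold prefixHist
  have key : ∀ r : Fin (s.1 + 1),
      (Fin.snoc β y : Fin (T + 2) → Profile n)
          (Fin.castLE (Nat.succ_le_succ (Fin.castSucc s).isLt.le) r)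
        = β (Fin.castLE (Nat.succ_le_succ s.isLt.le) r) := by
    intro r
    rw [snoc_lt β y _ (by simpa using lt_of_lt_of_le r.isLt (show s.1 + 1 ≤ T + 1 by have := s.isLt; omega))]
    congr 1
  exact congrArg (fun f : Fin (s.1 + 1) → Profile n => (⟨s.1, f⟩ : Hist n)) (funext key)

lemma prefixHist_snoc_last {T : ℕ} (β : Fin (T + 1) → Profile n) (y : Profile n) :
    prefixHist (Fin.snoc β y : Fin (T + 2) → Profile n) (Fin.last T) = ⟨T, β⟩ := by
  unfold prefixHist
  have key : ∀ r : Fin (T + 1),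
      (Fin.snoc β y : Fin (T + 2) → Profile n)
          (Fin.castLE (Nat.succ_le_succ (Fin.last T).isLt.le) r)
        = β r := by
    intro r
    rw [snoc_lt β y _ (by simpa using r.isLt)]
    congr 1
  exact congrArg (fun f : Fin (T + 1) → Profile n => (⟨T, f⟩ : Hist n)) (funext key)

lemma pathHist_snoc (P : Rule n) (Uh : Hist n → UtilProfile n) (π : Profile n → ℝ) (T : ℕ)
    (β : Fin (T + 1) → Profile n) (y : Profile n) :
    pathHist P Uh π (T + 1) (Fin.snoc β y)
      = pathHist P Uh π T β * P (β (Fin.last T)) y (Uh ⟨T, β⟩) := by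
  unfold pathHist
  rw [Fin.prod_univ_castSucc]
  simp only [Fin.succ_castSucc, Fin.snoc_castSucc, Fin.succ_last, Fin.snoc_last,
    snoc_zero', prefixHist_snoc_castSucc, prefixHist_snoc_last]
  ring

end Paths

section Assembly
variable {n : ℕ}

/-- Equivalence between pairs (path, last step) and one-longer paths. -/
def snocEquiv' (n T : ℕ) : ((Fin (T + 1) → Profile n) × Profile n) ≃ (Fin (T + 2) → Profile n) where
  toFun p := Fin.snoc p.1 p.2
  invFun α := (Fin.init α, α (Fin.last (T + 1)))
  left_inv p := by simp [Fin.init_snoc, Fin.snoc_last]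
  right_inv α := by simp [Fin.snoc_init_self]

def oneEquiv (n : ℕ) : Profile n ≃ (Fin 1 → Profile n) :=
  ⟨fun x _ => x, fun f => f 0, fun _ => rfl,
    fun f => funext fun j => congrArg f (Subsingleton.elim _ _)⟩

noncomputable def AS (Pvec : Fin n → Rule n) (Uhat : UtilProfile n) (π : Profile n → ℝ)
    (T : ℕ) (w : Profile n → ℝ) : ℝ :=
  ∑ α : Fin (T + 1) → Profile n,
    pathStatic (asyncRule Pvec) Uhat π T α * w (α (Fin.last T))

noncomputable def AH (Pvec : Fin n → Rule n) (Uh : Hist n → UtilProfile n) (π : Profile n → ℝ)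
    (T : ℕ) (w : Hist n → ℝ) : ℝ :=
  ∑ α : Fin (T + 1) → Profile n,
    pathHist (asyncRule Pvec) Uh π T α * w ⟨T, α⟩

lemma AS_zero (Pvec : Fin n → Rule n) (Uhat : UtilProfile n) (π : Profile n → ℝ)
    (w : Profile n → ℝ) : AS Pvec Uhat π 0 w = ∑ x : Profile n, π x * w x := by
  unfold AS
  rw [← Equiv.sum_comp (oneEquiv n)]
  apply Finset.sum_congr rfl
  intro x _
  have h1 : ∀ j : Fin 1, (oneEquiv n x) j = x := fun j => rfl
  rw [pathStatic]
  simp [h1]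

lemma AH_zero (Pvec : Fin n → Rule n) (Uh : Hist n → UtilProfile n) (π : Profile n → ℝ)
    (w : Hist n → ℝ) : AH Pvec Uh π 0 w = ∑ x : Profile n, π x * w ⟨0, fun _ => x⟩ := by
  unfold AH
  rw [← Equiv.sum_comp (oneEquiv n)]
  apply Finset.sum_congr rfl
  intro x _
  have h1 : oneEquiv n x = fun _ => x := rfl
  rw [pathHist]
  simp [h1]

lemma AS_succ (Pvec : Fin n → Rule n) (Uhat : UtilProfile n) (π : Profile n → ℝ)
    (T : ℕ) (w : Profile n → ℝ) :
    AS Pvec Uhat π (T + 1) w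
      = AS Pvec Uhat π T (fun x => ∑ y : Profile n, asyncRule Pvec x y Uhat * w y) := by
  unfold AS
  rw [← Equiv.sum_comp (snocEquiv' n T)]
  rw [Fintype.sum_prod_type]
  apply Finset.sum_congr rfl
  intro β _
  rw [Finset.mul_sum]
  apply Finset.sum_congr rfl
  intro y _
  have hl : (snocEquiv' n T (β, y)) (Fin.last (T + 1)) = y := by
    show (Fin.snoc β y : Fin (T + 2) → Profile n) (Fin.last (T + 1)) = y
    exact Fin.snoc_last _ _
  show pathStatic (asyncRule Pvec) Uhat π (T+1) (Fin.snoc β y)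
      * w ((snocEquiv' n T (β, y)) (Fin.last (T + 1))) = _
  rw [hl, pathStatic_snoc]
  ring

lemma AH_succ (Pvec : Fin n → Rule n) (Uh : Hist n → UtilProfile n) (π : Profile n → ℝ)
    (T : ℕ) (w : Hist n → ℝ) :
    AH Pvec Uh π (T + 1) w
      = AH Pvec Uh π T
          (fun h => ∑ y : Profile n, asyncRule Pvec (lastProf h) y (Uh h) * w (extendH h y)) := by
  unfold AH
  rw [← Equiv.sum_comp (snocEquiv' n T)]
  rw [Fintype.sum_prod_type]
  apply Finset.sum_congr rfl
  intro β _
  rw [Finset.mul_sum]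
  apply Finset.sum_congr rfl
  intro y _
  show pathHist (asyncRule Pvec) Uh π (T+1) (Fin.snoc β y)
      * w ⟨T + 1, Fin.snoc β y⟩ = _
  rw [pathHist_snoc]
  have h1 : lastProf (⟨T, β⟩ : Hist n) = β (Fin.last T) := rfl
  have h2 : extendH (⟨T, β⟩ : Hist n) y = ⟨T + 1, Fin.snoc β y⟩ := rfl
  rw [h1, h2]
  ring

lemma AS_fS (Pvec : Fin n → Rule n) (Uhat : UtilProfile n) (π : Profile n → ℝ) :
    ∀ (T k : ℕ), AS Pvec Uhat π T (fS Pvec Uhat k)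
      = ∑ x : Profile n, π x * fS Pvec Uhat (k + T) x := by
  intro T
  induction T with
  | zero => intro k; rw [AS_zero]; rfl
  | succ T ih =>
    intro k
    rw [AS_succ]
    have : (fun x => ∑ y : Profile n, asyncRule Pvec x y Uhat * fS Pvec Uhat k y)
        = fS Pvec Uhat (k + 1) := rfl
    rw [this, ih (k + 1)]
    have : k + 1 + T = k + (T + 1) := by omega
    rw [this]

lemma AH_fH (Pvec : Fin n → Rule n) (Uh : Hist n → UtilProfile n) (π : Profile n → ℝ) :
    ∀ (T k : ℕ), AH Pvec Uh π T (fH Pvec Uh k)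
      = ∑ x : Profile n, π x * fH Pvec Uh (k + T) ⟨0, fun _ => x⟩ := by
  intro T
  induction T with
  | zero => intro k; rw [AH_zero]; rfl
  | succ T ih =>
    intro k
    rw [AH_succ]
    have : (fun h => ∑ y : Profile n,
          asyncRule Pvec (lastProf h) y (Uh h) * fH Pvec Uh k (extendH h y))
        = fH Pvec Uh (k + 1) := rfl
    rw [this, ih (k + 1)]
    have : k + 1 + T = k + (T + 1) := by omega
    rw [this]

lemma prAt_static (Pvec : Fin n → Rule n) (Uhat : UtilProfile n) (π : Profile n → ℝ)
    (T : ℕ) :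
    prAt T (pathStatic (asyncRule Pvec) Uhat π T) (fun _ => true)
      = AS Pvec Uhat π T (fS Pvec Uhat 0) := by
  unfold prAt AS
  rw [Finset.sum_filter]
  apply Finset.sum_congr rfl
  intro α _
  by_cases hα : α (Fin.last T) = fun _ => true
  · rw [if_pos hα]
    show _ = _ * fS Pvec Uhat 0 (α (Fin.last T))
    rw [show fS Pvec Uhat 0 (α (Fin.last T)) = 1 from by simp [fS, hα], mul_one]
  · rw [if_neg hα]
    show (0:ℝ) = _ * fS Pvec Uhat 0 (α (Fin.last T))
    rw [show fS Pvec Uhat 0 (α (Fin.last T)) = 0 from by simp [fS, hα], mul_zero]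

lemma prAt_hist (Pvec : Fin n → Rule n) (Uh : Hist n → UtilProfile n) (π : Profile n → ℝ)
    (T : ℕ) :
    prAt T (pathHist (asyncRule Pvec) Uh π T) (fun _ => true)
      = AH Pvec Uh π T (fH Pvec Uh 0) := by
  unfold prAt AH
  rw [Finset.sum_filter]
  apply Finset.sum_congr rfl
  intro α _
  have hlp : lastProf (⟨T, α⟩ : Hist n) = α (Fin.last T) := rfl
  by_cases hα : α (Fin.last T) = fun _ => true
  · rw [if_pos hα]
    show _ = _ * fH Pvec Uh 0 ⟨T, α⟩
    rw [show fH Pvec Uh 0 (⟨T, α⟩ : Hist n) = 1 from by simp [fH, hlp, hα], mul_one]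
  · rw [if_neg hα]
    show (0:ℝ) = _ * fH Pvec Uh 0 ⟨T, α⟩
    rw [show fH Pvec Uh 0 (⟨T, α⟩ : Hist n) = 0 from by simp [fH, hlp, hα], mul_zero]

end Assembly

/-- For an aligned history-dependent game with a local and monotone asynchronous
learning rule, the probability of being at the all-ones profile at time `T` is at least
as large in the history-dependent game as in the static one. -/
theorem prob_all_ones_dominance (n : ℕ) (hn : 1 ≤ n) (Pvec : Fin n → Rule n)
    (hP : ∀ i, IsIndividual i (Pvec i) ∧ IsLocalRule i (Pvec i) ∧ IsMonotoneRule i (Pvec i))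
    (Uh : Hist n → UtilProfile n) (Uhat : UtilProfile n) (hA : Aligned Uh Uhat)
    (π : Profile n → ℝ) (hπ : IsProb π) (T : ℕ) :
    prAt T (pathStatic (asyncRule Pvec) Uhat π T) (fun _ => true)
      ≤ prAt T (pathHist (asyncRule Pvec) Uh π T) (fun _ => true) := by
  rw [prAt_static, prAt_hist, AS_fS, AH_fH]
  apply Finset.sum_le_sum
  intro x _
  apply mul_le_mul_of_nonneg_left _ (hπ.1 x)
  apply fS_le_fH Pvec hP Uh Uhat hA
  intro j
  exact le_of_eq rfl
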